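/- Let p be a partition probability function on partitions of n and d a deletion kernel such that p(λ)·d(λ,x) = q(n,x)·p(λ−{x}) for all partitions λ of n, all parts x ∈ λ, where q(n,x) := ∑_{λ ⊢ n : x ∈ λ} d(λ,x)·p(λ), and similarly at level n−r with decrement matrix q(n−r,·). Then for any partition λ of n containing two parts r and s (with p(λ−{r}) > 0, p(λ−{s}) > 0, d(λ,r) > 0, d(λ,s) > 0, d(λ−{r},s) > 0, d(λ−{s},r) > 0), one has [q(n,r)/d(λ,r)]·[q(n−r,s)/d(λ−{r},s)] = [q(n,s)/d(λ,s)]·[q(n−s,r)/d(λ−{s},r)]. -/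
import Mathlib


/-- If a partition probability function `p` is regenerative with respect to a
deletion kernel `d` with decrement matrix `q` at all levels (the regeneration
equation `p(λ)·d(λ,x) = q(|λ|,x)·p(λ−{x})` holds for all partitions `λ` and
parts `x ∈ λ`), then for a partition `λ` of `n` containing parts `r` and `s`,
with the indicated quantities positive,
`[q(n,r)/d(λ,r)]·[q(n−r,s)/d(λ−{r},s)] = [q(n,s)/d(λ,s)]·[q(n−s,r)/d(λ−{s},r)]`.
Partitions are encoded by multiplicity functions `a : ℕ →₀ ℕ` and
`λ−{x}` is `a - Finsupp.single x 1`. -/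
theorem stmt_15 (p : (ℕ →₀ ℕ) → ℝ) (d : (ℕ →₀ ℕ) → ℕ → ℝ) (q : ℕ → ℕ → ℝ)
    (hreg : ∀ (a : ℕ →₀ ℕ) (x : ℕ), a 0 = 0 → 1 ≤ a x →
      p a * d a x = q (a.sum fun r m => r * m) x * p (a - Finsupp.single x 1))
    (a : ℕ →₀ ℕ) (ha0 : a 0 = 0) (r s : ℕ)
    (hr : 1 ≤ a r) (hs : 1 ≤ ((a - Finsupp.single r 1) : ℕ →₀ ℕ) s)
    (hpr : 0 < p (a - Finsupp.single r 1)) (hps : 0 < p (a - Finsupp.single s 1))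
    (hdr : 0 < d a r) (hds : 0 < d a s)
    (hdrs : 0 < d (a - Finsupp.single r 1) s) (hdsr : 0 < d (a - Finsupp.single s 1) r) :
    q (a.sum fun x m => x * m) r / d a r *
        (q ((a - Finsupp.single r 1).sum fun x m => x * m) s / d (a - Finsupp.single r 1) s) =
      q (a.sum fun x m => x * m) s / d a s *
        (q ((a - Finsupp.single s 1).sum fun x m => x * m) r / d (a - Finsupp.single s 1) r) := by
  have hsub : ∀ (x y : ℕ), ((a - Finsupp.single x 1) : ℕ →₀ ℕ) y = a y - (Finsupp.single x 1) y :=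
    fun x y => Finsupp.tsub_apply a (Finsupp.single x 1) y
  have hrs := hsub r s
  have hsr' := hsub s r
  have hsingle_rs : (Finsupp.single r 1 : ℕ →₀ ℕ) s ≤ 1 := by
    rcases eq_or_ne r s with h | h
    · simp [h]
    · simp [Finsupp.single_apply_eq_zero, h]
  have hsingle_sr : (Finsupp.single s 1 : ℕ →₀ ℕ) r ≤ 1 := by
    rcases eq_or_ne s r with h | h
    · simp [h]
    · simp [Finsupp.single_apply_eq_zero, h]
  have hs' : 1 ≤ a s := by omega
  have hsrge : 1 ≤ ((a - Finsupp.single s 1) : ℕ →₀ ℕ) r := by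
    rw [hsr']
    rcases eq_or_ne s r with h | h
    · subst h
      have := hsub s s
      simp only [Finsupp.single_eq_same] at this hs ⊢
      omega
    · simp [Finsupp.single_apply_eq_zero, h, hr]
  have har0 : ((a - Finsupp.single r 1) : ℕ →₀ ℕ) 0 = 0 := by
    rw [hsub]; omega
  have has0 : ((a - Finsupp.single s 1) : ℕ →₀ ℕ) 0 = 0 := by
    rw [hsub]; omega
  have h1 := hreg a r ha0 hr
  have h2 := hreg a s ha0 hs'
  have h3 := hreg (a - Finsupp.single r 1) s har0 hs
  have h4 := hreg (a - Finsupp.single s 1) r has0 hsrge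
  have hcomm : a - Finsupp.single r 1 - Finsupp.single s 1
      = a - Finsupp.single s 1 - Finsupp.single r 1 := tsub_right_comm
  rw [hcomm] at h3
  set k := p (a - Finsupp.single s 1 - Finsupp.single r 1) with hk
  have hkne : k ≠ 0 := by
    intro h0
    rw [h0, mul_zero] at h3
    exact absurd h3 (ne_of_gt (mul_pos hpr hdrs))
  have hprne := ne_of_gt hpr
  have hpsne := ne_of_gt hps
  field_simp
  have key : (q (a.sum fun x m => x * m) r *
        q ((a - Finsupp.single r 1).sum fun x m => x * m) s *
        (d a s * d (a - Finsupp.single s 1) r) -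
      q (a.sum fun x m => x * m) s *
        q ((a - Finsupp.single s 1).sum fun x m => x * m) r *
        (d a r * d (a - Finsupp.single r 1) s)) *
      (p (a - Finsupp.single r 1) * p (a - Finsupp.single s 1) * k) = 0 := by
    linear_combination -(d a s * d (a - Finsupp.single s 1) r *
        q ((a - Finsupp.single r 1).sum fun x m => x * m) s *
        p (a - Finsupp.single s 1) * k) * h1 +
      (d a r * d (a - Finsupp.single r 1) s *
        q ((a - Finsupp.single s 1).sum fun x m => x * m) r *
        p (a - Finsupp.single r 1) * k) * h2 -
      (p a * d a r * d a s * d (a - Finsupp.single s 1) r *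
        p (a - Finsupp.single s 1)) * h3 +
      (p a * d a s * d a r * d (a - Finsupp.single r 1) s *
        p (a - Finsupp.single r 1)) * h4
  have hmul : p (a - Finsupp.single r 1) * p (a - Finsupp.single s 1) * k ≠ 0 :=
    mul_ne_zero (mul_ne_zero hprne hpsne) hkne
  have := (mul_eq_zero.mp key).resolve_right hmul
  linarith [this]
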